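/- Let A ⊂ B be an extension of finite-dimensional algebras over a field K such that A is maximal in B. Then A + J(A)·B = A and A + B·J(A) = A, where J(A) denotes the Jacobson radical of A. -/

import Mathlib

open Submodule

section Aux

variable {K B : Type*} [Field K] [Ring B] [Algebra K B]

/-- The image of the Jacobson radical of a subalgebra `A` inside `B`, as a `K`-submodule. -/
noncomputable def jbMod (A : Subalgebra K B) : Submodule K B :=
  Submodule.map (A.val.toLinearMap)
    (Submodule.restrictScalars K (Ideal.jacobson (⊥ : Ideal A)))

lemma mem_jbMod {A : Subalgebra K B} {x : B} :
    x ∈ jbMod A ↔ ∃ j : A, j ∈ Ideal.jacobson (⊥ : Ideal A) ∧ (j : B) = x := by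
  simp [jbMod, Submodule.mem_map]

lemma jbMod_le (A : Subalgebra K B) : jbMod A ≤ Subalgebra.toSubmodule A := by
  intro x hx
  obtain ⟨j, _, rfl⟩ := mem_jbMod.mp hx
  exact j.2

lemma A_mul_jbMod (A : Subalgebra K B) :
    Subalgebra.toSubmodule A * jbMod A ≤ jbMod A := by
  refine Submodule.mul_le.mpr fun m hm n hn => ?_
  obtain ⟨j, hj, rfl⟩ := mem_jbMod.mp hn
  exact mem_jbMod.mpr ⟨⟨m, hm⟩ * j, Ideal.mul_mem_left _ _ hj, rfl⟩

lemma jbMod_mul_A (A : Subalgebra K B) :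
    jbMod A * Subalgebra.toSubmodule A ≤ jbMod A := by
  refine Submodule.mul_le.mpr fun m hm n hn => ?_
  obtain ⟨j, hj, rfl⟩ := mem_jbMod.mp hm
  refine mem_jbMod.mpr ⟨j * ⟨n, hn⟩, ?_, rfl⟩
  exact Ideal.mul_mem_right _ _ hj

lemma jbMod_mul_jbMod (A : Subalgebra K B) : jbMod A * jbMod A ≤ jbMod A :=
  le_trans (mul_le_mul' le_rfl (jbMod_le A)) (jbMod_mul_A A)

lemma A_mul_A (A : Subalgebra K B) :
    Subalgebra.toSubmodule A * Subalgebra.toSubmodule A ≤ Subalgebra.toSubmodule A :=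
  Submodule.mul_le.mpr fun m hm n hn =>
    (Subalgebra.mem_toSubmodule A).mpr
      (mul_mem ((Subalgebra.mem_toSubmodule A).mp hm) ((Subalgebra.mem_toSubmodule A).mp hn))

/-- Nakayama-style lemma: a submodule `N` with `N ≤ J(A)·N` (witnessed through a finite
spanning set) is trivial. -/
lemma nak_aux (A : Subalgebra K B) :
    ∀ (S : Finset B) (N : Submodule K B), N ≤ jbMod A * span K (S : Set B) →
      span K (S : Set B) ≤ N → N = ⊥ := by
  classical
  intro S
  induction S using Finset.strongInduction with
  | _ S ih =>
    rcases S.eq_empty_or_nonempty with rfl | ⟨x, hx⟩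
    · intro N h1 _
      refine le_bot_iff.mp (le_trans h1 ?_)
      simp [Submodule.mul_bot]
    · intro N h1 h2
      set S' := S.erase x with hS'
      have hSS : (S : Set B) = insert x (S' : Set B) := by
        rw [hS', Finset.coe_erase, Set.insert_diff_singleton,
          Set.insert_eq_self.mpr (by exact_mod_cast hx)]
      have hsplit : span K (S : Set B) = span K {x} ⊔ span K (S' : Set B) := by
        rw [hSS, Submodule.span_insert]
      have hxN : x ∈ N := h2 (Submodule.subset_span (by exact_mod_cast hx))
      have hxmem : x ∈ jbMod A * span K {x} ⊔ jbMod A * span K (S' : Set B) := by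
        have := h1 hxN
        rwa [hsplit, Submodule.mul_sup] at this
      rcases Submodule.mem_sup.mp hxmem with ⟨y, hy, z, hz, hxyz⟩
      obtain ⟨j, hj, hjy⟩ : ∃ j : A, j ∈ Ideal.jacobson (⊥ : Ideal A) ∧ (j : B) * x = y := by
        refine Submodule.mul_induction_on hy ?_ ?_
        · intro m hm n hn
          obtain ⟨j, hj, rfl⟩ := mem_jbMod.mp hm
          obtain ⟨c, rfl⟩ := Submodule.mem_span_singleton.mp hn
          refine ⟨c • j, ?_, ?_⟩
          · rw [← algebraMap_smul (↥A) c j]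
            exact Submodule.smul_mem _ _ hj
          · rw [mul_smul_comm]
            push_cast
            rw [smul_mul_assoc]
        · rintro a b ⟨j1, hj1, rfl⟩ ⟨j2, hj2, rfl⟩
          exact ⟨j1 + j2, add_mem hj1 hj2, by push_cast; rw [add_mul]⟩
      have h1j : ((1 : B) - (j : B)) * x = z := by
        rw [sub_mul, one_mul, hjy, ← hxyz, add_sub_cancel_left]
      obtain ⟨s, hs⟩ := Ideal.exists_mul_sub_mem_of_sub_one_mem_jacobson (1 - j)
        (by simpa using Submodule.neg_mem _ hj)
      have hs1 : s * (1 - j) = 1 := sub_eq_zero.mp (Ideal.mem_bot.mp hs)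
      have hxz : x = (s : B) * z := by
        have hcast : ((s * (1 - j) : A) : B) = (s : B) * ((1 : B) - (j : B)) := by
          push_cast
          rfl
        calc x = ((1 : A) : B) * x := by rw [OneMemClass.coe_one, one_mul]
          _ = ((s * (1 - j) : A) : B) * x := by rw [hs1]
          _ = (s : B) * (((1 : B) - (j : B)) * x) := by rw [hcast, mul_assoc]
          _ = (s : B) * z := by rw [h1j]
      have hxS' : x ∈ jbMod A * span K (S' : Set B) := by
        have hIncl : Subalgebra.toSubmodule A * (jbMod A * span K (S' : Set B)) ≤
            jbMod A * span K (S' : Set B) := by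
          rw [← mul_assoc]
          exact mul_le_mul' (A_mul_jbMod A) le_rfl
        rw [hxz]
        exact hIncl (Submodule.mul_mem_mul s.2 hz)
      have hN' : N ≤ jbMod A * span K (S' : Set B) := by
        refine le_trans h1 ?_
        rw [hsplit, Submodule.mul_sup]
        refine sup_le ?_ le_rfl
        have hxle : span K {x} ≤ jbMod A * span K (S' : Set B) :=
          Submodule.span_le.mpr (Set.singleton_subset_iff.mpr hxS')
        calc jbMod A * span K {x} ≤ jbMod A * (jbMod A * span K (S' : Set B)) :=
              mul_le_mul' le_rfl hxle
          _ = (jbMod A * jbMod A) * span K (S' : Set B) := (mul_assoc _ _ _).symm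
          _ ≤ jbMod A * span K (S' : Set B) :=
              mul_le_mul' (jbMod_mul_jbMod A) le_rfl
      refine ih S' (Finset.erase_ssubset hx) N hN' ?_
      refine le_trans ?_ h2
      exact Submodule.span_mono (by exact_mod_cast Finset.erase_subset x S)

/-- The Jacobson radical of a finite-dimensional algebra is nilpotent (image version). -/
lemma jbMod_nilpotent [FiniteDimensional K B] (A : Subalgebra K B) :
    ∃ n, 1 ≤ n ∧ jbMod A ^ n = ⊥ := by
  have hmono : ∀ n : ℕ, jbMod A ^ (n + 2) ≤ jbMod A ^ (n + 1) := by
    intro n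
    calc jbMod A ^ (n + 2) = jbMod A ^ (n + 1) * jbMod A := pow_succ _ _
      _ = jbMod A ^ n * (jbMod A * jbMod A) := by rw [pow_succ, mul_assoc]
      _ ≤ jbMod A ^ n * jbMod A := mul_le_mul' le_rfl (jbMod_mul_jbMod A)
      _ = jbMod A ^ (n + 1) := (pow_succ _ _).symm
  have hanti : ∀ {p q : ℕ}, p ≤ q → jbMod A ^ (q + 1) ≤ jbMod A ^ (p + 1) := by
    intro p q h
    induction q with
    | zero => obtain rfl := Nat.le_zero.mp h; exact le_rfl
    | succ q ihq =>
      rcases eq_or_lt_of_le h with rfl | hlt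
      · exact le_rfl
      · exact le_trans (hmono q) (ihq (Nat.lt_succ_iff.mp hlt))
  obtain ⟨n, hn⟩ := IsArtinian.monotone_stabilizes (R := K) (M := B)
    ⟨fun k => OrderDual.toDual (jbMod A ^ (k + 1)), fun p q h => hanti h⟩
  have hst : jbMod A ^ (n + 1) = jbMod A ^ (n + 2) := by
    have := hn (n + 1) (Nat.le_succ n)
    exact congrArg OrderDual.ofDual this
  obtain ⟨S, hS⟩ := (IsNoetherian.noetherian (jbMod A ^ (n + 1)) : Submodule.FG _)
  have hle : jbMod A ^ (n + 1) ≤ jbMod A * span K (S : Set B) := by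
    rw [hS]
    calc jbMod A ^ (n + 1) = jbMod A ^ (n + 2) := hst
      _ = jbMod A * jbMod A ^ (n + 1) := pow_succ' _ _
      _ ≤ jbMod A * jbMod A ^ (n + 1) := le_rfl
  exact ⟨n + 1, by omega, nak_aux A S _ hle hS.le⟩

lemma left_key [FiniteDimensional K B] (A : Subalgebra K B) (hmax : IsCoatom A) :
    jbMod A * ⊤ ≤ Subalgebra.toSubmodule A := by
  set A' := Subalgebra.toSubmodule A with hA'
  set P : Submodule K B := A' ⊔ jbMod A * ⊤ with hP
  have h1 : (1 : B) ∈ P := Submodule.mem_sup_left A.one_mem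
  have hPP : P * P ≤ P := by
    rw [hP, Submodule.sup_mul, Submodule.mul_sup, Submodule.mul_sup]
    refine sup_le (sup_le ?_ ?_) (sup_le ?_ ?_)
    · exact le_trans (A_mul_A A) le_sup_left
    · refine le_trans ?_ le_sup_right
      rw [← mul_assoc]
      exact mul_le_mul' (A_mul_jbMod A) le_rfl
    · refine le_trans ?_ le_sup_right
      rw [mul_assoc]
      exact mul_le_mul' le_rfl le_top
    · refine le_trans ?_ le_sup_right
      rw [mul_assoc]
      exact mul_le_mul' le_rfl le_top
  have hmul : ∀ x y : B, x ∈ P → y ∈ P → x * y ∈ P :=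
    fun x y hx hy => hPP (Submodule.mul_mem_mul hx hy)
  set S1 : Subalgebra K B := P.toSubalgebra h1 hmul with hS1
  have hAS : A ≤ S1 := fun x hx => Submodule.mem_sup_left hx
  have hS1P : Subalgebra.toSubmodule S1 = P := rfl
  rcases eq_or_lt_of_le hAS with heq | hlt
  · intro x hx
    have hxS1 : x ∈ S1 := Submodule.mem_sup_right hx
    rwa [← heq] at hxS1
  · have htop : S1 = ⊤ := hmax.2 _ hlt
    have hPtop : P = ⊤ := by
      rw [← hS1P, htop, Algebra.top_toSubmodule]
    have hstep : ∀ m : ℕ, (⊤ : Submodule K B) ≤ A' ⊔ jbMod A ^ (m + 1) * ⊤ := by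
      intro m
      induction m with
      | zero => rw [pow_one]; exact hPtop.ge
      | succ m ih =>
        have h2 : jbMod A * ⊤ ≤ A' ⊔ jbMod A ^ (m + 2) * ⊤ := by
          calc jbMod A * ⊤ ≤ jbMod A * (A' ⊔ jbMod A ^ (m + 1) * ⊤) :=
                mul_le_mul' le_rfl ih
            _ = jbMod A * A' ⊔ jbMod A * (jbMod A ^ (m + 1) * ⊤) := Submodule.mul_sup _ _ _
            _ ≤ A' ⊔ jbMod A ^ (m + 2) * ⊤ := by
                refine sup_le_sup (le_trans (jbMod_mul_A A) (jbMod_le A)) ?_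
                rw [← mul_assoc, ← pow_succ']
        calc (⊤ : Submodule K B) ≤ A' ⊔ jbMod A * ⊤ := hPtop.ge
          _ ≤ A' ⊔ (A' ⊔ jbMod A ^ (m + 2) * ⊤) := sup_le_sup_left h2 _
          _ = A' ⊔ jbMod A ^ (m + 2) * ⊤ := by rw [← sup_assoc, sup_idem]
    obtain ⟨n, hn1, hn0⟩ := jbMod_nilpotent A
    obtain ⟨m, rfl⟩ : ∃ m, n = m + 1 := ⟨n - 1, by omega⟩
    have hA'top : (⊤ : Submodule K B) ≤ A' := by
      have := hstep m
      rwa [hn0, Submodule.bot_mul, sup_bot_eq] at this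
    exfalso
    exact hmax.1 (Algebra.toSubmodule_eq_top.mp (top_le_iff.mp hA'top))

lemma right_key [FiniteDimensional K B] (A : Subalgebra K B) (hmax : IsCoatom A) :
    (⊤ : Submodule K B) * jbMod A ≤ Subalgebra.toSubmodule A := by
  set A' := Subalgebra.toSubmodule A with hA'
  set P : Submodule K B := A' ⊔ (⊤ : Submodule K B) * jbMod A with hP
  have h1 : (1 : B) ∈ P := Submodule.mem_sup_left A.one_mem
  have hPP : P * P ≤ P := by
    rw [hP, Submodule.sup_mul, Submodule.mul_sup, Submodule.mul_sup]
    refine sup_le (sup_le ?_ ?_) (sup_le ?_ ?_)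
    · exact le_trans (A_mul_A A) le_sup_left
    · refine le_trans ?_ le_sup_right
      rw [← mul_assoc]
      exact mul_le_mul' le_top le_rfl
    · refine le_trans ?_ le_sup_right
      rw [mul_assoc]
      exact mul_le_mul' le_rfl (jbMod_mul_A A)
    · refine le_trans ?_ le_sup_right
      calc ((⊤ : Submodule K B) * jbMod A) * ((⊤ : Submodule K B) * jbMod A)
          = (((⊤ : Submodule K B) * jbMod A) * ⊤) * jbMod A := (mul_assoc _ _ _).symm
        _ ≤ (⊤ : Submodule K B) * jbMod A := mul_le_mul' le_top le_rfl
  have hmul : ∀ x y : B, x ∈ P → y ∈ P → x * y ∈ P :=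
    fun x y hx hy => hPP (Submodule.mul_mem_mul hx hy)
  set S1 : Subalgebra K B := P.toSubalgebra h1 hmul with hS1
  have hAS : A ≤ S1 := fun x hx => Submodule.mem_sup_left hx
  have hS1P : Subalgebra.toSubmodule S1 = P := rfl
  rcases eq_or_lt_of_le hAS with heq | hlt
  · intro x hx
    have hxS1 : x ∈ S1 := Submodule.mem_sup_right hx
    rwa [← heq] at hxS1
  · have htop : S1 = ⊤ := hmax.2 _ hlt
    have hPtop : P = ⊤ := by
      rw [← hS1P, htop, Algebra.top_toSubmodule]
    have hstep : ∀ m : ℕ, (⊤ : Submodule K B) ≤ A' ⊔ (⊤ : Submodule K B) * jbMod A ^ (m + 1) := by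
      intro m
      induction m with
      | zero => rw [pow_one]; exact hPtop.ge
      | succ m ih =>
        have h2 : (⊤ : Submodule K B) * jbMod A ≤
            A' ⊔ (⊤ : Submodule K B) * jbMod A ^ (m + 2) := by
          calc (⊤ : Submodule K B) * jbMod A
              ≤ (A' ⊔ (⊤ : Submodule K B) * jbMod A ^ (m + 1)) * jbMod A :=
                mul_le_mul' ih le_rfl
            _ = A' * jbMod A ⊔ ((⊤ : Submodule K B) * jbMod A ^ (m + 1)) * jbMod A :=
                Submodule.sup_mul _ _ _
            _ ≤ A' ⊔ (⊤ : Submodule K B) * jbMod A ^ (m + 2) := by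
                refine sup_le_sup (le_trans (A_mul_jbMod A) (jbMod_le A)) ?_
                rw [mul_assoc, ← pow_succ]
        calc (⊤ : Submodule K B) ≤ A' ⊔ (⊤ : Submodule K B) * jbMod A := hPtop.ge
          _ ≤ A' ⊔ (A' ⊔ (⊤ : Submodule K B) * jbMod A ^ (m + 2)) := sup_le_sup_left h2 _
          _ = A' ⊔ (⊤ : Submodule K B) * jbMod A ^ (m + 2) := by rw [← sup_assoc, sup_idem]
    obtain ⟨n, hn1, hn0⟩ := jbMod_nilpotent A
    obtain ⟨m, rfl⟩ : ∃ m, n = m + 1 := ⟨n - 1, by omega⟩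
    have hA'top : (⊤ : Submodule K B) ≤ A' := by
      have := hstep m
      rwa [hn0, Submodule.mul_bot, sup_bot_eq] at this
    exfalso
    exact hmax.1 (Algebra.toSubmodule_eq_top.mp (top_le_iff.mp hA'top))

lemma span_left (A : Subalgebra K B) :
    span K {x : B | ∃ j : A, j ∈ Ideal.jacobson (⊥ : Ideal A) ∧ ∃ b : B, x = (j : B) * b}
      = jbMod A * ⊤ := by
  apply le_antisymm
  · rw [Submodule.span_le]
    rintro x ⟨j, hj, b, rfl⟩
    exact Submodule.mul_mem_mul (mem_jbMod.mpr ⟨j, hj, rfl⟩) Submodule.mem_top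
  · refine Submodule.mul_le.mpr fun m hm b _ => ?_
    obtain ⟨j, hj, rfl⟩ := mem_jbMod.mp hm
    exact Submodule.subset_span ⟨j, hj, b, rfl⟩

lemma span_right (A : Subalgebra K B) :
    span K {x : B | ∃ j : A, j ∈ Ideal.jacobson (⊥ : Ideal A) ∧ ∃ b : B, x = b * (j : B)}
      = (⊤ : Submodule K B) * jbMod A := by
  apply le_antisymm
  · rw [Submodule.span_le]
    rintro x ⟨j, hj, b, rfl⟩
    exact Submodule.mul_mem_mul Submodule.mem_top (mem_jbMod.mpr ⟨j, hj, rfl⟩)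
  · refine Submodule.mul_le.mpr fun b _ m hm => ?_
    obtain ⟨j, hj, rfl⟩ := mem_jbMod.mp hm
    exact Submodule.subset_span ⟨j, hj, b, rfl⟩

end Aux

/-- If `A` is a maximal subalgebra of a finite-dimensional algebra `B`,
then `A + J(A)·B = A` and `A + B·J(A) = A`. -/
theorem stmt1 {K B : Type*} [Field K] [Ring B] [Algebra K B] [FiniteDimensional K B]
    (A : Subalgebra K B) (hmax : IsCoatom A) :
    (Subalgebra.toSubmodule A ⊔ Submodule.span K
        {x : B | ∃ j : A, j ∈ Ideal.jacobson (⊥ : Ideal A) ∧ ∃ b : B, x = (j : B) * b}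
      = Subalgebra.toSubmodule A)
    ∧ (Subalgebra.toSubmodule A ⊔ Submodule.span K
        {x : B | ∃ j : A, j ∈ Ideal.jacobson (⊥ : Ideal A) ∧ ∃ b : B, x = b * (j : B)}
      = Subalgebra.toSubmodule A) := by
  constructor
  · rw [span_left A]
    exact sup_eq_left.mpr (left_key A hmax)
  · rw [span_right A]
    exact sup_eq_left.mpr (right_key A hmax)
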